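/- Under an (α,β)-admissible smoothing Ψ̃ of the nuclear norm, the GBPA algorithm with potentials Φ̃_t(S) = Ψ̃(S; L_t/η), where L_t = √(G²I + M_t), M_t = Σ_{s=1}^t G_s G_s^T, ||G_t||_op ≤ G for all t, and η = √(α/β), achieves regret Reg_T ≤ 2√(αβ) · D · tr(√(G²I + M_T)) + (1 − √(αβ)) D ||G_1||_*. -/

import Mathlib

open Matrix Finset
open scoped Classical

noncomputable def psqrt {m : ℕ} (A : Matrix (Fin m) (Fin m) ℝ) : Matrix (Fin m) (Fin m) ℝ :=
  if h : A.PosSemidef then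
    (h.1.eigenvectorUnitary : Matrix (Fin m) (Fin m) ℝ) *
      diagonal ((↑) ∘ (√·) ∘ h.1.eigenvalues) *
      (star h.1.eigenvectorUnitary : Matrix (Fin m) (Fin m) ℝ)
  else 0

noncomputable def nuclearNorm {m : ℕ} {n : Type*} [Fintype n]
    (A : Matrix (Fin m) n ℝ) : ℝ :=
  (psqrt (A * Aᵀ)).trace

/-- Frobenius inner product `⟨A, B⟩ = tr(Aᵀ B)`. -/
noncomputable def ip {m : ℕ} {n : Type*} [Fintype n] (A B : Matrix (Fin m) n ℝ) : ℝ :=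
  (Aᵀ * B).trace

open scoped MatrixOrder in
lemma psqrt_eq_cfc {k : ℕ} {A : Matrix (Fin k) (Fin k) ℝ} (hA : A.PosSemidef) :
    psqrt A = CFC.sqrt A := by
  rw [psqrt, dif_pos hA, CFC.sqrt_eq_real_sqrt A hA.nonneg, cfcₙ_eq_cfc, hA.1.cfc_eq,
    IsHermitian.cfc, Unitary.conjStarAlgAut_apply]
  simp [Function.comp_def]

noncomputable def Matrix.PosSemidef.sqrt {k : ℕ} {A : Matrix (Fin k) (Fin k) ℝ}
    (_hA : A.PosSemidef) : Matrix (Fin k) (Fin k) ℝ :=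
  psqrt A

open scoped MatrixOrder in
lemma Matrix.PosSemidef.sqrt_mul_self {k : ℕ} {A : Matrix (Fin k) (Fin k) ℝ}
    (hA : A.PosSemidef) : hA.sqrt * hA.sqrt = A := by
  rw [Matrix.PosSemidef.sqrt, psqrt_eq_cfc hA]
  exact CFC.sqrt_mul_sqrt_self A hA.nonneg

open scoped MatrixOrder in
lemma Matrix.PosSemidef.posSemidef_sqrt {k : ℕ} {A : Matrix (Fin k) (Fin k) ℝ}
    (hA : A.PosSemidef) : hA.sqrt.PosSemidef := by
  rw [Matrix.PosSemidef.sqrt, psqrt_eq_cfc hA]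
  exact Matrix.nonneg_iff_posSemidef.mp (CFC.sqrt_nonneg A)

open scoped MatrixOrder in
lemma Matrix.PosSemidef.eq_sqrt_of_sq_eq {k : ℕ} {A : Matrix (Fin k) (Fin k) ℝ}
    (hA : A.PosSemidef) {B : Matrix (Fin k) (Fin k) ℝ} (hB : B.PosSemidef) (h : A ^ 2 = B) :
    A = hB.sqrt := by
  rw [Matrix.PosSemidef.sqrt, psqrt_eq_cfc hB, ← h, CFC.sqrt_sq A hA.nonneg]

section Aux

variable {k : ℕ}

lemma herm_smul {A : Matrix (Fin k) (Fin k) ℝ} (hA : A.IsHermitian) (c : ℝ) :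
    (c • A).IsHermitian := by
  unfold Matrix.IsHermitian at *
  rw [conjTranspose_smul, hA]; simp

lemma psd_diag {A : Matrix (Fin k) (Fin k) ℝ} (hA : A.PosSemidef) (i : Fin k) : 0 ≤ A i i := by
  exact hA.diag_nonneg

lemma psd_trace_nonneg {A : Matrix (Fin k) (Fin k) ℝ} (hA : A.PosSemidef) : 0 ≤ A.trace :=
  Finset.sum_nonneg fun i _ => psd_diag hA i

lemma trace_mono {A B : Matrix (Fin k) (Fin k) ℝ} (h : (B - A).PosSemidef) :
    A.trace ≤ B.trace := by
  have := psd_trace_nonneg h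
  rw [trace_sub] at this; linarith

lemma psd_smul {A : Matrix (Fin k) (Fin k) ℝ} (hA : A.PosSemidef) {c : ℝ} (hc : 0 ≤ c) :
    (c • A).PosSemidef := by
  exact hA.smul hc

lemma posdef_smul {A : Matrix (Fin k) (Fin k) ℝ} (hA : A.PosDef) {c : ℝ} (hc : 0 < c) :
    (c • A).PosDef := by
  exact hA.smul hc

lemma psd_trace_mul_nonneg {A B : Matrix (Fin k) (Fin k) ℝ} (hA : A.PosSemidef)
    (hB : B.PosSemidef) : 0 ≤ (A * B).trace := by
  have e : (hA.sqrt * B * hA.sqrt).trace = (A * B).trace := by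
    rw [trace_mul_cycle, hA.sqrt_mul_self]
  rw [← e]
  have hpsd : (hA.sqrt * B * hA.sqrt).PosSemidef := by
    have := hB.mul_mul_conjTranspose_same hA.sqrt
    rwa [hA.posSemidef_sqrt.1] at this
  exact psd_trace_nonneg hpsd

lemma trace_mul_mono {A B C : Matrix (Fin k) (Fin k) ℝ} (hAB : (B - A).PosSemidef)
    (hC : C.PosSemidef) : (A * C).trace ≤ (B * C).trace := by
  have h := psd_trace_mul_nonneg hAB hC
  rw [Matrix.sub_mul, trace_sub] at h
  linarith

lemma psqrt_eq {A : Matrix (Fin k) (Fin k) ℝ} (hA : A.PosSemidef) : psqrt A = hA.sqrt :=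
  rfl

lemma psqrt_psd {A : Matrix (Fin k) (Fin k) ℝ} (hA : A.PosSemidef) : (psqrt A).PosSemidef := by
  rw [psqrt_eq hA]; exact hA.posSemidef_sqrt

lemma psqrt_mul_self {A : Matrix (Fin k) (Fin k) ℝ} (hA : A.PosSemidef) :
    psqrt A * psqrt A = A := by
  rw [psqrt_eq hA]; exact hA.sqrt_mul_self

lemma psqrt_of_sq {B : Matrix (Fin k) (Fin k) ℝ} (hB : B.PosSemidef) :
    psqrt (B * B) = B := by
  have hBB : (B * B).PosSemidef := by
    have := Matrix.posSemidef_conjTranspose_mul_self B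
    rwa [hB.1] at this
  rw [psqrt_eq hBB]
  exact (hB.eq_sqrt_of_sq_eq hBB (by rw [pow_two])).symm

lemma posdef_of_psd_inj {A : Matrix (Fin k) (Fin k) ℝ} (hA : A.PosSemidef)
    (h : ∀ x, A *ᵥ x = 0 → x = 0) : A.PosDef := by
  refine PosDef.of_dotProduct_mulVec_pos hA.1 fun x hx => ?_
  have h0 := hA.dotProduct_mulVec_nonneg x
  rcases lt_or_eq_of_le h0 with h1 | h1
  · simpa using h1
  · exfalso
    apply hx
    apply h
    rw [← (hA.dotProduct_mulVec_zero_iff x)]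
    exact h1.symm

lemma psqrt_posdef {A : Matrix (Fin k) (Fin k) ℝ} (hA : A.PosDef) : (psqrt A).PosDef := by
  apply posdef_of_psd_inj (psqrt_psd hA.posSemidef)
  intro x hx
  have hAx : A *ᵥ x = 0 := by
    rw [← psqrt_mul_self hA.posSemidef, ← mulVec_mulVec, hx, mulVec_zero]
  by_contra hxne
  exact absurd hAx (by
    intro hc
    have := hA.dotProduct_mulVec_pos hxne
    rw [hc] at this
    simp at this)

lemma dot_sym {H : Matrix (Fin k) (Fin k) ℝ} (hH : H.IsHermitian) (u w : Fin k → ℝ) :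
    (H *ᵥ u) ⬝ᵥ w = u ⬝ᵥ (H *ᵥ w) := by
  have ht : Hᵀ = H := by
    rw [← conjTranspose_eq_transpose_of_trivial, hH]
  rw [dotProduct_mulVec u H w]
  conv_lhs => rw [← ht]
  rw [mulVec_transpose]

lemma sqrt_mono {A B : Matrix (Fin k) (Fin k) ℝ} (hA : A.PosSemidef) (hB : B.PosSemidef)
    (hAB : (B - A).PosSemidef) : (psqrt B - psqrt A).PosSemidef := by
  set X := psqrt A with hXdef
  set Y := psqrt B with hYdef
  have hXpsd : X.PosSemidef := psqrt_psd hA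
  have hYpsd : Y.PosSemidef := psqrt_psd hB
  have hH : (Y - X).IsHermitian := hYpsd.1.sub hXpsd.1
  apply hH.posSemidef_iff_eigenvalues_nonneg.mpr
  intro i
  set μ := hH.eigenvalues i with hμdef
  set u : Fin k → ℝ := ⇑(hH.eigenvectorBasis i) with hudef
  have hu0 : u ≠ 0 := by
    intro h0
    apply hH.eigenvectorBasis.orthonormal.ne_zero i
    rw [hudef] at h0
    simpa using h0
  have heig : (Y - X) *ᵥ u = μ • u := hH.mulVec_eigenvectorBasis i
  -- the key identity
  have hkey : (Y + X) * (Y - X) + (Y - X) * (Y + X) = (B - A) + (B - A) := by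
    have hYY : Y * Y = B := psqrt_mul_self hB
    have hXX : X * X = A := psqrt_mul_self hA
    rw [← hYY, ← hXX]
    noncomm_ring
  set c := u ⬝ᵥ (Y + X) *ᵥ u with hcdef
  have h1 : u ⬝ᵥ ((Y + X) * (Y - X)) *ᵥ u = μ * c := by
    rw [← mulVec_mulVec, heig, mulVec_smul, dotProduct_smul]
    rfl
  have h2 : u ⬝ᵥ ((Y - X) * (Y + X)) *ᵥ u = μ * c := by
    rw [← mulVec_mulVec, ← dot_sym hH, heig, smul_dotProduct]
    rfl
  have h3 : 0 ≤ u ⬝ᵥ (B - A) *ᵥ u := by simpa using hAB.dotProduct_mulVec_nonneg u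
  have h4 : 0 ≤ μ * c := by
    have := congrArg (fun M => u ⬝ᵥ M *ᵥ u) hkey
    simp only [add_mulVec, dotProduct_add, h1, h2] at this
    nlinarith [this, h3]
  have hc0 : 0 ≤ c := by simpa using (hYpsd.add hXpsd).dotProduct_mulVec_nonneg u
  rcases lt_or_eq_of_le hc0 with hc | hc
  · exact nonneg_of_mul_nonneg_right (by linarith [h4] : 0 ≤ c * μ) hc
  · -- c = 0 : then Y u = X u = 0 hence μ u = 0
    have hY0 : 0 ≤ u ⬝ᵥ Y *ᵥ u := by simpa using hYpsd.dotProduct_mulVec_nonneg u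
    have hX0 : 0 ≤ u ⬝ᵥ X *ᵥ u := by simpa using hXpsd.dotProduct_mulVec_nonneg u
    have hsum : u ⬝ᵥ Y *ᵥ u + u ⬝ᵥ X *ᵥ u = 0 := by
      rw [hcdef] at hc
      rw [add_mulVec, dotProduct_add] at hc
      linarith
    have hYu : Y *ᵥ u = 0 := by
      rw [← hYpsd.dotProduct_mulVec_zero_iff u]
      simp only [star_trivial]
      linarith
    have hXu : X *ᵥ u = 0 := by
      rw [← hXpsd.dotProduct_mulVec_zero_iff u]
      simp only [star_trivial]
      linarith
    have : μ • u = 0 := by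
      rw [← heig, sub_mulVec, hYu, hXu, sub_zero]
    rcases smul_eq_zero.mp this with h | h
    · exact le_of_eq h.symm
    · exact absurd h hu0

lemma cauchy_dot (a b : Fin k → ℝ) : (a ⬝ᵥ b) ^ 2 ≤ (a ⬝ᵥ a) * (b ⬝ᵥ b) := by
  simpa [dotProduct, pow_two] using
    Finset.sum_mul_sq_le_sq_mul_sq Finset.univ a b

lemma inv_antitone {A B : Matrix (Fin k) (Fin k) ℝ} (hA : A.PosDef) (hB : B.PosDef)
    (hAB : (B - A).PosSemidef) : (A⁻¹ - B⁻¹).PosSemidef := by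
  have hAinv : (A⁻¹).PosDef := hA.inv
  have hBinv : (B⁻¹).PosDef := hB.inv
  refine PosSemidef.of_dotProduct_mulVec_nonneg (hAinv.1.sub hBinv.1) fun x => ?_
  simp only [star_trivial, sub_mulVec, dotProduct_sub]
  rw [sub_nonneg]
  set s := psqrt A with hsdef
  have hs : s.PosDef := psqrt_posdef hA
  have hss : s * s = A := psqrt_mul_self hA.posSemidef
  have hsunit : IsUnit s.det := hs.det_pos.ne'.isUnit
  set y := B⁻¹ *ᵥ x with hydef
  -- Cauchy-Schwarz with a = s y, b = s⁻¹ x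
  have key := cauchy_dot (s *ᵥ y) (s⁻¹ *ᵥ x)
  have e1 : (s *ᵥ y) ⬝ᵥ (s⁻¹ *ᵥ x) = y ⬝ᵥ x := by
    rw [dot_sym hs.1 y (s⁻¹ *ᵥ x), mulVec_mulVec, mul_nonsing_inv _ hsunit, one_mulVec]
  have e2 : (s *ᵥ y) ⬝ᵥ (s *ᵥ y) = y ⬝ᵥ (A *ᵥ y) := by
    rw [dot_sym hs.1 y (s *ᵥ y), mulVec_mulVec, hss]
  have e3 : (s⁻¹ *ᵥ x) ⬝ᵥ (s⁻¹ *ᵥ x) = x ⬝ᵥ (A⁻¹ *ᵥ x) := by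
    have hsinv : (s⁻¹).IsHermitian := hs.inv.1
    rw [dot_sym hsinv x (s⁻¹ *ᵥ x), mulVec_mulVec, ← Matrix.mul_inv_rev, hss]
  rw [e1, e2, e3] at key
  -- y ⬝ᵥ x = x ⬝ᵥ B⁻¹ x
  have e4 : y ⬝ᵥ x = x ⬝ᵥ (B⁻¹ *ᵥ x) := by
    rw [hydef, dot_sym hBinv.1 x x]
  -- y ⬝ᵥ A y ≤ y ⬝ᵥ B y = x ⬝ᵥ B⁻¹ x
  have e5 : y ⬝ᵥ (B *ᵥ y) = x ⬝ᵥ (B⁻¹ *ᵥ x) := by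
    rw [hydef, mulVec_mulVec, mul_nonsing_inv _ hB.det_pos.ne'.isUnit, one_mulVec]
    rw [dot_sym hBinv.1 x x]
  have e6 : y ⬝ᵥ (A *ᵥ y) ≤ x ⬝ᵥ (B⁻¹ *ᵥ x) := by
    have := hAB.dotProduct_mulVec_nonneg y
    simp only [star_trivial, sub_mulVec, dotProduct_sub] at this
    rw [e5] at this
    linarith
  rw [e4] at key
  set c := x ⬝ᵥ (B⁻¹ *ᵥ x) with hcdef
  set d := x ⬝ᵥ (A⁻¹ *ᵥ x) with hddef
  have hc0 : 0 ≤ c := by simpa using hBinv.posSemidef.dotProduct_mulVec_nonneg x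
  have hd0 : 0 ≤ d := by simpa using hAinv.posSemidef.dotProduct_mulVec_nonneg x
  have key2 : c ^ 2 ≤ c * d := le_trans key (by nlinarith [e6, hd0])
  rcases eq_or_lt_of_le hc0 with hc | hc
  · linarith
  · nlinarith [key2]

lemma herm_sq_psd {R : Matrix (Fin k) (Fin k) ℝ} (hR : R.IsHermitian) :
    (R * R).PosSemidef := by
  have := Matrix.posSemidef_conjTranspose_mul_self R
  rwa [hR] at this

lemma core_lemma {Q R : Matrix (Fin k) (Fin k) ℝ} (hQ : Q.PosDef) (hR : R.IsHermitian) :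
    (Q⁻¹ * (Q * Q - R * R)).trace ≤ 2 * (Q.trace - R.trace) := by
  have hQu : IsUnit Q.det := hQ.det_pos.ne'.isUnit
  have hQQ : (Q⁻¹ * (Q * Q)).trace = Q.trace := by
    rw [← Matrix.mul_assoc, nonsing_inv_mul _ hQu, Matrix.one_mul]
  have hQR : (Q⁻¹ * (Q * R)).trace = R.trace := by
    rw [← Matrix.mul_assoc, nonsing_inv_mul _ hQu, Matrix.one_mul]
  have hRQ : (Q⁻¹ * (R * Q)).trace = R.trace := by
    rw [← Matrix.mul_assoc, trace_mul_cycle, mul_nonsing_inv _ hQu, Matrix.one_mul]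
  have hexp : (Q - R) * (Q - R) = (Q * Q) - (Q * R) - (R * Q) + (R * R) := by
    noncomm_ring
  have h1 : 0 ≤ (Q⁻¹ * ((Q - R) * (Q - R))).trace :=
    psd_trace_mul_nonneg hQ.inv.posSemidef (herm_sq_psd (hQ.1.sub hR))
  rw [hexp] at h1
  have hlin : Q⁻¹ * ((Q * Q) - (Q * R) - (R * Q) + (R * R))
      = Q⁻¹ * (Q * Q) - Q⁻¹ * (Q * R) - Q⁻¹ * (R * Q) + Q⁻¹ * (R * R) := by
    noncomm_ring
  rw [hlin, trace_add, trace_sub, trace_sub, hQQ, hQR, hRQ] at h1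
  have hgoal : Q⁻¹ * (Q * Q - R * R) = Q⁻¹ * (Q * Q) - Q⁻¹ * (R * R) := by
    noncomm_ring
  rw [hgoal, trace_sub, hQQ]
  linarith

lemma tp_step {Gb s : ℝ} (hGb : 0 < Gb) (hs : 0 < s) {Mt Δ : Matrix (Fin k) (Fin k) ℝ}
    (hMt : Mt.PosSemidef) (hΔ : Δ.PosSemidef)
    (hΔle : ((Gb ^ 2) • (1 : Matrix (Fin k) (Fin k) ℝ) - Δ).PosSemidef) :
    ((psqrt ((Gb ^ 2) • (1 : Matrix (Fin k) (Fin k) ℝ) + Mt))⁻¹ * Δ).trace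
      ≤ 2 * ((psqrt (Mt + Δ + (s ^ 2) • (1 : Matrix (Fin k) (Fin k) ℝ))).trace
            - (psqrt (Mt + (s ^ 2) • (1 : Matrix (Fin k) (Fin k) ℝ))).trace)
        + (s / Gb ^ 2) * Δ.trace := by
  set I : Matrix (Fin k) (Fin k) ℝ := (1 : Matrix (Fin k) (Fin k) ℝ) with hI
  have hGb2 : (0:ℝ) < Gb ^ 2 := by positivity
  have hA : ((Gb ^ 2) • I + Mt).PosDef :=
    (posdef_smul Matrix.PosDef.one hGb2).add_posSemidef hMt
  set P := psqrt ((Gb ^ 2) • I + Mt) with hPdef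
  have hP : P.PosDef := psqrt_posdef hA
  have hPP : P * P = (Gb ^ 2) • I + Mt := psqrt_mul_self hA.posSemidef
  set Ps := P + s • I with hPsdef
  have hPs : Ps.PosDef := hP.add_posSemidef (psd_smul Matrix.PosSemidef.one hs.le)
  have hPu : IsUnit P.det := hP.det_pos.ne'.isUnit
  have hPsu : IsUnit Ps.det := hPs.det_pos.ne'.isUnit
  -- step e: correction
  have hPsP : (Ps * P).PosDef := by
    have h1 : Ps * P = ((Gb ^ 2) • I + Mt) + s • P := by
      rw [hPsdef, Matrix.add_mul, ← hPP, smul_mul_assoc, Matrix.one_mul]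
    rw [h1]
    exact hA.add_posSemidef (psd_smul hP.posSemidef hs.le)
  have hgbinv : ((Gb ^ 2) • I)⁻¹ = (Gb ^ 2)⁻¹ • I := by
    apply Matrix.inv_eq_left_inv
    rw [smul_mul_assoc, Matrix.mul_smul, Matrix.one_mul, smul_smul,
      inv_mul_cancel₀ hGb2.ne', one_smul]
  have hcmp : (((Gb ^ 2) • I)⁻¹ - (Ps * P)⁻¹).PosSemidef := by
    apply inv_antitone (posdef_smul Matrix.PosDef.one hGb2) hPsP
    have h1 : Ps * P - (Gb ^ 2) • I = Mt + s • P := by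
      rw [hPsdef, Matrix.add_mul, hPP, smul_mul_assoc, Matrix.one_mul]
      abel
    rw [h1]
    exact hMt.add (psd_smul hP.posSemidef hs.le)
  have hdiff : P⁻¹ - Ps⁻¹ = s • ((Ps * P)⁻¹) := by
    rw [Matrix.mul_inv_rev]
    have h2 : P⁻¹ * (Ps * Ps⁻¹) = P⁻¹ := by rw [mul_nonsing_inv _ hPsu, Matrix.mul_one]
    have h3 : P⁻¹ * (P * Ps⁻¹) = Ps⁻¹ := by
      rw [← Matrix.mul_assoc, nonsing_inv_mul _ hPu, Matrix.one_mul]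
    calc P⁻¹ - Ps⁻¹ = P⁻¹ * (Ps * Ps⁻¹) - P⁻¹ * (P * Ps⁻¹) := by rw [h2, h3]
    _ = P⁻¹ * ((Ps - P) * Ps⁻¹) := by noncomm_ring
    _ = P⁻¹ * ((s • I) * Ps⁻¹) := by rw [hPsdef]; congr 1; rw [add_sub_cancel_left]
    _ = s • (P⁻¹ * Ps⁻¹) := by
        rw [smul_mul_assoc, Matrix.one_mul, Matrix.mul_smul]
  have hcorr : (P⁻¹ * Δ).trace ≤ (Ps⁻¹ * Δ).trace + (s / Gb ^ 2) * Δ.trace := by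
    have h4 : (P⁻¹ * Δ).trace - (Ps⁻¹ * Δ).trace = s * ((Ps * P)⁻¹ * Δ).trace := by
      rw [← trace_sub, ← Matrix.sub_mul, hdiff, smul_mul_assoc, trace_smul, smul_eq_mul]
    have h5 : ((Ps * P)⁻¹ * Δ).trace ≤ (((Gb ^ 2) • I)⁻¹ * Δ).trace :=
      trace_mul_mono hcmp hΔ
    have h6 : (((Gb ^ 2) • I)⁻¹ * Δ).trace = (Gb ^ 2)⁻¹ * Δ.trace := by
      rw [hgbinv, smul_mul_assoc, Matrix.one_mul, trace_smul, smul_eq_mul]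
    have h7 : s * ((Ps * P)⁻¹ * Δ).trace ≤ s * ((Gb ^ 2)⁻¹ * Δ.trace) := by
      rw [← h6]; exact mul_le_mul_of_nonneg_left h5 hs.le
    rw [div_eq_mul_inv]
    nlinarith [h4, h7]
  -- step f: Ps dominates Q
  set Q := psqrt (Mt + Δ + (s ^ 2) • I) with hQdef
  have hN : (Mt + Δ + (s ^ 2) • I).PosDef :=
    Matrix.PosDef.posSemidef_add (hMt.add hΔ) (posdef_smul Matrix.PosDef.one (by positivity))
  have hQ : Q.PosDef := psqrt_posdef hN
  have hQQ : Q * Q = Mt + Δ + (s ^ 2) • I := psqrt_mul_self hN.posSemidef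
  have hPsQ : (Ps - Q).PosSemidef := by
    have h8 : psqrt (Ps * Ps) = Ps := psqrt_of_sq hPs.posSemidef
    have h9 : (Ps * Ps - (Mt + Δ + (s ^ 2) • I)).PosSemidef := by
      have hII : (s • I) * (s • I) = (s ^ 2) • I := by
        rw [smul_mul_assoc, Matrix.one_mul, smul_smul, ← pow_two]
      have hIP : (s • I) * P = s • P := by rw [smul_mul_assoc, Matrix.one_mul]
      have hPI : P * (s • I) = s • P := by rw [Matrix.mul_smul, Matrix.mul_one]
      have h10 : Ps * Ps = ((Gb ^ 2) • I + Mt) + s • P + s • P + (s^2) • I := by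
        rw [hPsdef, Matrix.add_mul, Matrix.mul_add, Matrix.mul_add, hII, hIP, hPI, hPP]
        abel
      have h11 : Ps * Ps - (Mt + Δ + (s ^ 2) • I)
          = ((Gb ^ 2) • I - Δ) + (s • P + s • P) := by
        rw [h10]; abel
      rw [h11]
      exact hΔle.add ((psd_smul hP.posSemidef hs.le).add (psd_smul hP.posSemidef hs.le))
    have h12 := sqrt_mono hN.posSemidef (herm_sq_psd hPs.1) h9
    rwa [h8, ← hQdef] at h12
  -- step g: compare inverses
  have hg : (Ps⁻¹ * Δ).trace ≤ (Q⁻¹ * Δ).trace :=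
    trace_mul_mono (inv_antitone hQ hPs hPsQ) hΔ
  -- step h: core lemma
  set R := psqrt (Mt + (s ^ 2) • I) with hRdef
  have hMR : (Mt + (s ^ 2) • I).PosDef :=
    Matrix.PosDef.posSemidef_add hMt (posdef_smul Matrix.PosDef.one (by positivity))
  have hR : R.PosDef := psqrt_posdef hMR
  have hRR : R * R = Mt + (s ^ 2) • I := psqrt_mul_self hMR.posSemidef
  have hΔeq : Q * Q - R * R = Δ := by rw [hQQ, hRR]; abel
  have hcore := core_lemma hQ hR.1
  rw [hΔeq] at hcore
  have hch : (Q⁻¹ * Δ).trace ≤ 2 * (Q.trace - R.trace) := hcore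
  linarith [hcorr, hg, hch]

lemma self_mul_transpose_psd {n : ℕ} (A : Matrix (Fin k) (Fin n) ℝ) :
    (A * Aᵀ).PosSemidef := by
  have := Matrix.posSemidef_self_mul_conjTranspose A
  rwa [conjTranspose_eq_transpose_of_trivial] at this

lemma psd_one_smul {c : ℝ} (hc : 0 ≤ c) : (c • (1 : Matrix (Fin k) (Fin k) ℝ)).PosSemidef :=
  psd_smul Matrix.PosSemidef.one hc

lemma psd_sum {ι : Type*} (s : Finset ι) (f : ι → Matrix (Fin k) (Fin k) ℝ)
    (h : ∀ i ∈ s, (f i).PosSemidef) : (∑ i ∈ s, f i).PosSemidef := by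
  classical
  induction s using Finset.induction_on with
  | empty => simpa using (Matrix.PosSemidef.zero : (0 : Matrix (Fin k) (Fin k) ℝ).PosSemidef)
  | @insert a t hni ih =>
    rw [Finset.sum_insert hni]
    exact (h a (Finset.mem_insert_self a t)).add
      (ih fun i hi => h i (Finset.mem_insert_of_mem hi))

lemma sqrt_shift_le {A : Matrix (Fin k) (Fin k) ℝ} (hA : A.PosSemidef) {s : ℝ} (hs : 0 < s) :
    (psqrt (A + (s ^ 2) • (1 : Matrix (Fin k) (Fin k) ℝ))).trace
      ≤ (psqrt A).trace + s * k := by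
  have hP : (psqrt A).PosSemidef := psqrt_psd hA
  have hPP : psqrt A * psqrt A = A := psqrt_mul_self hA
  have hPs : (psqrt A + s • (1 : Matrix (Fin k) (Fin k) ℝ)).PosSemidef :=
    hP.add (psd_one_smul hs.le)
  have hII : (s • (1 : Matrix (Fin k) (Fin k) ℝ)) * (s • (1 : Matrix (Fin k) (Fin k) ℝ))
      = (s ^ 2) • (1 : Matrix (Fin k) (Fin k) ℝ) := by
    rw [smul_mul_assoc, Matrix.one_mul, smul_smul, ← pow_two]
  have hIP : (s • (1 : Matrix (Fin k) (Fin k) ℝ)) * psqrt A = s • psqrt A := by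
    rw [smul_mul_assoc, Matrix.one_mul]
  have hPI : psqrt A * (s • (1 : Matrix (Fin k) (Fin k) ℝ)) = s • psqrt A := by
    rw [Matrix.mul_smul, Matrix.mul_one]
  have hsq : (psqrt A + s • (1 : Matrix (Fin k) (Fin k) ℝ))
        * (psqrt A + s • (1 : Matrix (Fin k) (Fin k) ℝ))
      = A + s • psqrt A + s • psqrt A + (s ^ 2) • (1 : Matrix (Fin k) (Fin k) ℝ) := by
    rw [Matrix.add_mul, Matrix.mul_add, Matrix.mul_add, hII, hIP, hPI, hPP]
    abel
  have hBpsd : (A + s • psqrt A + s • psqrt A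
      + (s ^ 2) • (1 : Matrix (Fin k) (Fin k) ℝ)).PosSemidef := by
    exact ((hA.add (psd_smul hP hs.le)).add (psd_smul hP hs.le)).add
      (psd_one_smul (by positivity))
  have hdiffpsd : (A + s • psqrt A + s • psqrt A + (s ^ 2) • (1 : Matrix (Fin k) (Fin k) ℝ)
      - (A + (s ^ 2) • (1 : Matrix (Fin k) (Fin k) ℝ))).PosSemidef := by
    have he : A + s • psqrt A + s • psqrt A + (s ^ 2) • (1 : Matrix (Fin k) (Fin k) ℝ)
        - (A + (s ^ 2) • (1 : Matrix (Fin k) (Fin k) ℝ)) = s • psqrt A + s • psqrt A := by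
      abel
    rw [he]
    exact (psd_smul hP hs.le).add (psd_smul hP hs.le)
  have hmono := sqrt_mono (hA.add (psd_one_smul (by positivity))) hBpsd hdiffpsd
  rw [← hsq, psqrt_of_sq hPs] at hmono
  have htr := trace_mono hmono
  rw [trace_add, trace_smul, trace_one] at htr
  simpa [Fintype.card_fin, smul_eq_mul, mul_comm] using htr

lemma tp_total {n : ℕ} (T : ℕ) (hT : 1 ≤ T) {Gb : ℝ} (hGb : 0 < Gb)
    (G : ℕ → Matrix (Fin k) (Fin n) ℝ)
    (hGbd : ∀ t, 1 ≤ t → t ≤ T →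
      ((Gb ^ 2) • (1 : Matrix (Fin k) (Fin k) ℝ) - G t * (G t)ᵀ).PosSemidef)
    (M : ℕ → Matrix (Fin k) (Fin k) ℝ)
    (hM : ∀ t, M t = ∑ s ∈ Finset.Icc 1 t, G s * (G s)ᵀ) :
    ∑ t ∈ Finset.Icc 1 (T - 1),
        ((psqrt ((Gb ^ 2) • (1 : Matrix (Fin k) (Fin k) ℝ) + M t))⁻¹
          * (G (t + 1) * (G (t + 1))ᵀ)).trace
      ≤ 2 * ((psqrt ((Gb ^ 2) • (1 : Matrix (Fin k) (Fin k) ℝ) + M T)).trace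
          - nuclearNorm (G 1)) := by
  have hMpsd : ∀ t, (M t).PosSemidef := by
    intro t
    rw [hM t]
    exact psd_sum _ _ fun i _ => self_mul_transpose_psd (G i)
  have hMsucc : ∀ t, M (t + 1) = M t + G (t + 1) * (G (t + 1))ᵀ := by
    intro t
    rw [hM, hM, Finset.sum_Icc_succ_top (Nat.le_add_left 1 t)]
  have main : ∀ s : ℝ, 0 < s → ∀ N : ℕ, N + 1 ≤ T →
      ∑ t ∈ Finset.Icc 1 N,
        ((psqrt ((Gb ^ 2) • (1 : Matrix (Fin k) (Fin k) ℝ) + M t))⁻¹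
          * (G (t + 1) * (G (t + 1))ᵀ)).trace
      ≤ 2 * ((psqrt (M (N + 1) + (s ^ 2) • (1 : Matrix (Fin k) (Fin k) ℝ))).trace
            - (psqrt (M 1 + (s ^ 2) • (1 : Matrix (Fin k) (Fin k) ℝ))).trace)
        + (s / Gb ^ 2) * ∑ t ∈ Finset.Icc 1 N, (G (t + 1) * (G (t + 1))ᵀ).trace := by
    intro s hs N
    induction N with
    | zero => intro _; simp
    | succ N ih =>
      intro hNT
      have hN1T : N + 1 ≤ T := le_trans (Nat.le_succ _) hNT
      have ihv := ih hN1T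
      rw [Finset.sum_Icc_succ_top (Nat.le_add_left 1 N),
        Finset.sum_Icc_succ_top (Nat.le_add_left 1 N)]
      have hstep := tp_step hGb hs (hMpsd (N + 1))
        (self_mul_transpose_psd (G (N + 1 + 1)))
        (hGbd (N + 1 + 1) (by omega) (by omega))
      rw [← hMsucc (N + 1)] at hstep
      linarith [ihv, hstep]
  have hM1 : M 1 = G 1 * (G 1)ᵀ := by rw [hM]; simp
  apply le_of_forall_pos_le_add
  intro ε hε
  set C : ℝ := 2 * k + k * (T - 1 : ℕ) with hC
  have hC0 : 0 ≤ C := by positivity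
  set s : ℝ := ε / (C + 1) with hs
  have hspos : 0 < s := by positivity
  have happ := main s hspos (T - 1) (by omega)
  rw [Nat.sub_add_cancel hT] at happ
  have hApos : ((Gb ^ 2) • (1 : Matrix (Fin k) (Fin k) ℝ) + M T).PosSemidef :=
    ((posdef_smul Matrix.PosDef.one (by positivity : (0:ℝ) < Gb ^ 2)).add_posSemidef
      (hMpsd T)).posSemidef
  have h1 : (psqrt (M T + (s ^ 2) • (1 : Matrix (Fin k) (Fin k) ℝ))).trace
      ≤ (psqrt ((Gb ^ 2) • (1 : Matrix (Fin k) (Fin k) ℝ) + M T)).trace + s * k := by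
    have hdiff : ((Gb ^ 2) • (1 : Matrix (Fin k) (Fin k) ℝ) + M T
          + (s ^ 2) • (1 : Matrix (Fin k) (Fin k) ℝ)
        - (M T + (s ^ 2) • (1 : Matrix (Fin k) (Fin k) ℝ))).PosSemidef := by
      have he : (Gb ^ 2) • (1 : Matrix (Fin k) (Fin k) ℝ) + M T
            + (s ^ 2) • (1 : Matrix (Fin k) (Fin k) ℝ)
          - (M T + (s ^ 2) • (1 : Matrix (Fin k) (Fin k) ℝ))
          = (Gb ^ 2) • (1 : Matrix (Fin k) (Fin k) ℝ) := by abel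
      rw [he]
      exact psd_one_smul (by positivity)
    have hmono := sqrt_mono ((hMpsd T).add (psd_one_smul (by positivity)))
      (hApos.add (psd_one_smul (by positivity))) hdiff
    exact le_trans (trace_mono hmono) (sqrt_shift_le hApos hspos)
  have h4 : (psqrt (M 1)).trace
      ≤ (psqrt (M 1 + (s ^ 2) • (1 : Matrix (Fin k) (Fin k) ℝ))).trace := by
    apply trace_mono
    apply sqrt_mono (hMpsd 1) ((hMpsd 1).add (psd_one_smul (by positivity)))
    have he : M 1 + (s ^ 2) • (1 : Matrix (Fin k) (Fin k) ℝ) - M 1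
        = (s ^ 2) • (1 : Matrix (Fin k) (Fin k) ℝ) := by abel
    rw [he]
    exact psd_one_smul (by positivity)
  have h5 : ∑ t ∈ Finset.Icc 1 (T - 1), (G (t + 1) * (G (t + 1))ᵀ).trace
      ≤ (T - 1 : ℕ) * (Gb ^ 2 * k) := by
    have hb : ∀ t ∈ Finset.Icc 1 (T - 1), (G (t + 1) * (G (t + 1))ᵀ).trace ≤ Gb ^ 2 * k := by
      intro t ht
      simp only [Finset.mem_Icc] at ht
      have h6 := trace_mono (hGbd (t + 1) (by omega) (by omega))
      rwa [trace_smul, trace_one, Fintype.card_fin, smul_eq_mul] at h6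
    calc ∑ t ∈ Finset.Icc 1 (T - 1), (G (t + 1) * (G (t + 1))ᵀ).trace
        ≤ ∑ _t ∈ Finset.Icc 1 (T - 1), Gb ^ 2 * k := Finset.sum_le_sum hb
      _ = (T - 1 : ℕ) * (Gb ^ 2 * k) := by
          rw [Finset.sum_const, Nat.card_Icc]
          simp [nsmul_eq_mul]
  have hnn : nuclearNorm (G 1) = (psqrt (M 1)).trace := by
    rw [nuclearNorm, hM1]
  have hsC : s * C ≤ ε := by
    rw [hs, div_mul_eq_mul_div, div_le_iff₀ (by positivity : (0:ℝ) < C + 1)]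
    nlinarith [hε, hC0]
  have hfinal : (s / Gb ^ 2) * ∑ t ∈ Finset.Icc 1 (T - 1), (G (t + 1) * (G (t + 1))ᵀ).trace
      ≤ s * (k * (T - 1 : ℕ)) := by
    have hle := mul_le_mul_of_nonneg_left h5 (by positivity : (0:ℝ) ≤ s / Gb ^ 2)
    calc (s / Gb ^ 2) * ∑ t ∈ Finset.Icc 1 (T - 1), (G (t + 1) * (G (t + 1))ᵀ).trace
        ≤ (s / Gb ^ 2) * ((T - 1 : ℕ) * (Gb ^ 2 * k)) := hle
      _ = s * (k * (T - 1 : ℕ)) := by field_simp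
  rw [hnn]
  have hfin2 : s * (2 * k) + s * (k * (T - 1 : ℕ)) = s * C := by rw [hC]; ring
  nlinarith [happ, h1, h4, hfinal, hsC]

end Aux

section IpLemmas

variable {k : ℕ} {n : Type*} [Fintype n]

lemma ip_zero_right (A : Matrix (Fin k) n ℝ) : ip A (0 : Matrix (Fin k) n ℝ) = 0 := by
  simp [ip]

lemma ip_smul (c : ℝ) (A B : Matrix (Fin k) n ℝ) : ip A (c • B) = c * ip A B := by
  rw [ip, ip, Matrix.mul_smul, trace_smul, smul_eq_mul]

lemma ip_comm (A B : Matrix (Fin k) n ℝ) : ip A B = ip B A := by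
  rw [ip, ip, ← trace_transpose, transpose_mul, transpose_transpose]

end IpLemmas

/-- Theorem 3.2: under an `(α,β)`-admissible smoothing `Ψ` of the
nuclear norm (with gradient `g`), the GBPA with potentials `Φ̃_t(S) = Ψ(S; L t / η)`,
where `L t = √(G² I + M t)`, `M t = ∑_{s=1}^t G_s G_sᵀ`, `‖G_t‖_op ≤ G`, and
`η = √(α/β)`, achieves regret
`Reg_T ≤ 2√(αβ) D tr(√(G² I + M T)) + (1 − √(αβ)) D ‖G 1‖_*`. -/
theorem stmt16 {m n : ℕ} (T : ℕ) (hT : 1 ≤ T) (D Gb α β : ℝ)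
    (hD : 0 < D) (hG : 0 < Gb) (hα : 0 < α) (hβ : 0 < β)
    (Ψ : Matrix (Fin m) (Fin n) ℝ → Matrix (Fin m) (Fin m) ℝ → ℝ)
    (g : Matrix (Fin m) (Fin n) ℝ → Matrix (Fin m) (Fin m) ℝ → Matrix (Fin m) (Fin n) ℝ)
    -- (a) feasibility: `‖∇_X Ψ(X; L)‖_op ≤ 1`
    (hfeas : ∀ (L : Matrix (Fin m) (Fin m) ℝ), L.PosSemidef → ∀ X,
      ((1 : Matrix (Fin m) (Fin m) ℝ) - g X L * (g X L)ᵀ).PosSemidef)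
    -- (b) dominance
    (hdom : ∀ (L : Matrix (Fin m) (Fin m) ℝ), L.PosSemidef →
      ∀ X, nuclearNorm X ≤ Ψ X L)
    (hzero : ∀ X, Ψ X 0 = nuclearNorm X)
    -- (c) upper stability
    (hstab : ∀ L₁ L₂ : Matrix (Fin m) (Fin m) ℝ, L₁.PosSemidef → (L₂ - L₁).PosSemidef →
      ∀ X, Ψ X L₂ - Ψ X L₁ ≤ α * (L₂.trace - L₁.trace))
    -- `g` is the gradient of `Ψ(·; L)` for positive definite `L`
    (hgrad : ∀ L : Matrix (Fin m) (Fin m) ℝ, L.PosDef → ∀ X Dir,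
      HasDerivAt (fun τ : ℝ => Ψ (X + τ • Dir) L) (ip (g X L) Dir) 0)
    -- (d) smoothness of the Bregman divergence
    (hsmooth : ∀ L : Matrix (Fin m) (Fin m) ℝ, L.PosDef → ∀ X Y,
      Ψ Y L - Ψ X L - ip (g X L) (Y - X)
        ≤ β / 2 * ((X - Y)ᵀ * L⁻¹ * (X - Y)).trace)
    -- problem data
    (G : ℕ → Matrix (Fin m) (Fin n) ℝ)
    (hGb : ∀ t, 1 ≤ t → t ≤ T →
      ((Gb ^ 2) • (1 : Matrix (Fin m) (Fin m) ℝ) - G t * (G t)ᵀ).PosSemidef)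
    (M : ℕ → Matrix (Fin m) (Fin m) ℝ)
    (hM : ∀ t, M t = ∑ s ∈ Finset.Icc 1 t, G s * (G s)ᵀ)
    (L : ℕ → Matrix (Fin m) (Fin m) ℝ)
    (hL : ∀ t, L t = psqrt ((Gb ^ 2) • (1 : Matrix (Fin m) (Fin m) ℝ) + M t))
    (η : ℝ) (hη : η = Real.sqrt (α / β))
    (S : ℕ → Matrix (Fin m) (Fin n) ℝ)
    (hS : ∀ t, S t = ∑ s ∈ Finset.Icc 1 t, G s)
    -- GBPA iterates `X (t+1) = −D ∇Φ̃_t(S t)` with `Φ̃_t = Ψ(·; L t / η)`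
    (X : ℕ → Matrix (Fin m) (Fin n) ℝ)
    (hX1 : X 1 = 0)
    (hX : ∀ t, 1 ≤ t → X (t + 1) = (-D) • g (S t) (η⁻¹ • L t)) :
    (∑ t ∈ Finset.Icc 1 T, ip (G t) (X t)) + D * nuclearNorm (S T)
      ≤ 2 * Real.sqrt (α * β) * D *
          (psqrt ((Gb ^ 2) • (1 : Matrix (Fin m) (Fin m) ℝ) + M T)).trace +
        (1 - Real.sqrt (α * β)) * D * nuclearNorm (G 1) := by
    
  -- positivity of η and scalar identities
  have hηpos : 0 < η := by rw [hη]; exact Real.sqrt_pos.mpr (by positivity)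
  have hηinv : 0 < η⁻¹ := inv_pos.mpr hηpos
  have hη2 : η ^ 2 = α / β := by rw [hη]; exact Real.sq_sqrt (by positivity)
  have hr1 : α * η⁻¹ = Real.sqrt (α * β) := by
    have h1 : (α * η⁻¹) ^ 2 = α * β := by
      rw [mul_pow, inv_pow, hη2]
      field_simp
    rw [← h1, Real.sqrt_sq (by positivity)]
  have hr2 : β * η = Real.sqrt (α * β) := by
    have h1 : (β * η) ^ 2 = α * β := by
      rw [mul_pow, hη2]
      field_simp
    rw [← h1, Real.sqrt_sq (by positivity)]
  -- matrix positivity facts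
  have hApos : ∀ t, ((Gb ^ 2) • (1 : Matrix (Fin m) (Fin m) ℝ) + M t).PosDef := by
    intro t
    have hMpsd : (M t).PosSemidef := by
      rw [hM t]
      exact psd_sum _ _ fun i _ => self_mul_transpose_psd (G i)
    exact (posdef_smul Matrix.PosDef.one (by positivity : (0:ℝ) < Gb ^ 2)).add_posSemidef hMpsd
  have hLpos : ∀ t, (L t).PosDef := by
    intro t; rw [hL t]; exact psqrt_posdef (hApos t)
  have hLLpos : ∀ t, (η⁻¹ • L t).PosDef := fun t => posdef_smul (hLpos t) hηinv
  have hinvLL : ∀ t, (η⁻¹ • L t)⁻¹ = η • (L t)⁻¹ := by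
    intro t
    apply Matrix.inv_eq_left_inv
    rw [smul_mul_assoc, Matrix.mul_smul, smul_smul, nonsing_inv_mul _ (hLpos t).det_pos.ne'.isUnit,
      mul_inv_cancel₀ hηpos.ne', one_smul]
  have hMsucc : ∀ t, M (t + 1) = M t + G (t + 1) * (G (t + 1))ᵀ := by
    intro t
    rw [hM, hM, Finset.sum_Icc_succ_top (Nat.le_add_left 1 t)]
  have hSsucc : ∀ t, S (t + 1) = S t + G (t + 1) := by
    intro t
    rw [hS, hS, Finset.sum_Icc_succ_top (Nat.le_add_left 1 t)]
  have hLdiff : ∀ t, (L (t + 1) - L t).PosSemidef := by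
    intro t
    rw [hL, hL]
    apply sqrt_mono (hApos t).posSemidef (hApos (t + 1)).posSemidef
    have he : (Gb ^ 2) • (1 : Matrix (Fin m) (Fin m) ℝ) + M (t + 1)
        - ((Gb ^ 2) • (1 : Matrix (Fin m) (Fin m) ℝ) + M t) = G (t + 1) * (G (t + 1))ᵀ := by
      rw [hMsucc t]; abel
    rw [he]
    exact self_mul_transpose_psd _
  have hS1 : S 1 = G 1 := by rw [hS]; simp
  -- the key GBPA induction
  have key : ∀ N, 1 ≤ N → N ≤ T →
      (∑ t ∈ Finset.Icc 1 N, ip (G t) (X t)) + D * Ψ (S N) (η⁻¹ • L N)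
      ≤ D * nuclearNorm (G 1) + (D * (α * η⁻¹)) * (L N).trace
        + (D * (β * η / 2)) * ∑ t ∈ Finset.Icc 1 (N - 1),
            ((L t)⁻¹ * (G (t + 1) * (G (t + 1))ᵀ)).trace := by
    intro N hN1
    induction N, hN1 using Nat.le_induction with
    | base =>
      intro _
      rw [Finset.Icc_self, Finset.sum_singleton, hX1, ip_zero_right]
      have hst := hstab 0 (η⁻¹ • L 1) Matrix.PosSemidef.zero
        (by rw [sub_zero]; exact (hLLpos 1).posSemidef) (S 1)
      rw [hzero (S 1), hS1] at hst
      have hemp : Finset.Icc 1 (1 - 1) = (∅ : Finset ℕ) := by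
        rw [Finset.Icc_eq_empty]; omega
      rw [hemp, Finset.sum_empty, hS1]
      have htr0 : (0 : Matrix (Fin m) (Fin m) ℝ).trace = 0 := trace_zero _ _
      rw [htr0, trace_smul, smul_eq_mul, sub_zero] at hst
      have hmul := mul_le_mul_of_nonneg_left hst hD.le
      linarith [hmul]
    | succ N hN ih =>
      intro hNT
      have ihv := ih (by omega)
      -- split LHS sum
      rw [Finset.sum_Icc_succ_top (by omega : 1 ≤ N + 1)]
      -- split RHS sum
      have hidx : N + 1 - 1 = N := by omega
      rw [hidx]
      have hsplit : ∑ t ∈ Finset.Icc 1 N, ((L t)⁻¹ * (G (t + 1) * (G (t + 1))ᵀ)).trace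
          = ∑ t ∈ Finset.Icc 1 (N - 1), ((L t)⁻¹ * (G (t + 1) * (G (t + 1))ᵀ)).trace
            + ((L N)⁻¹ * (G (N + 1) * (G (N + 1))ᵀ)).trace := by
        conv_lhs => rw [show N = N - 1 + 1 by omega]
        rw [Finset.sum_Icc_succ_top (by omega : 1 ≤ N - 1 + 1)]
        rw [show N - 1 + 1 = N by omega]
      rw [hsplit]
      -- stability step
      have hst := hstab (η⁻¹ • L N) (η⁻¹ • L (N + 1)) (hLLpos N).posSemidef
        (by rw [← smul_sub]; exact psd_smul (hLdiff N) hηinv.le) (S (N + 1))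
      rw [trace_smul, trace_smul, smul_eq_mul, smul_eq_mul] at hst
      -- smoothness step
      have hsm := hsmooth (η⁻¹ • L N) (hLLpos N) (S N) (S (N + 1))
      have hgt : S (N + 1) - S N = G (N + 1) := by rw [hSsucc N]; abel
      have hneg : S N - S (N + 1) = -(G (N + 1)) := by rw [hSsucc N]; abel
      rw [hgt, hneg, hinvLL N] at hsm
      simp only [transpose_neg, Matrix.neg_mul, Matrix.mul_neg, neg_neg] at hsm
      have htrterm : ((G (N + 1))ᵀ * (η • (L N)⁻¹) * G (N + 1)).trace
          = η * ((L N)⁻¹ * (G (N + 1) * (G (N + 1))ᵀ)).trace := by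
        rw [Matrix.mul_smul, Matrix.smul_mul, trace_smul, smul_eq_mul]
        congr 1
        rw [trace_mul_cycle, trace_mul_comm]
      rw [htrterm] at hsm
      -- the played action
      have hXe := hX N hN
      have hipX : ip (G (N + 1)) (X (N + 1))
          = -(D * ip (g (S N) (η⁻¹ • L N)) (G (N + 1))) := by
        rw [hXe, ip_smul, ip_comm]; ring
      -- combine the scalar inequalities
      have comb : Ψ (S (N + 1)) (η⁻¹ • L (N + 1)) - Ψ (S N) (η⁻¹ • L N)
            - ip (g (S N) (η⁻¹ • L N)) (G (N + 1))
          ≤ α * η⁻¹ * (L (N + 1)).trace - α * η⁻¹ * (L N).trace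
            + (β * η / 2) * ((L N)⁻¹ * (G (N + 1) * (G (N + 1))ᵀ)).trace := by
        linarith [hst, hsm]
      have combD := mul_le_mul_of_nonneg_left comb hD.le
      linarith [ihv, combD, hipX]
  -- apply at N = T
  have keyT := key T hT le_rfl
  -- dominance
  have hdomT := hdom (η⁻¹ • L T) (hLLpos T).posSemidef (S T)
  have hDnn := mul_le_mul_of_nonneg_left hdomT hD.le
  -- trace potential bound
  have htp := tp_total (k := m) T hT hG G hGb M hM
  simp only [← hL] at htp
  have hcoeff : (0:ℝ) ≤ D * (β * η / 2) := by positivity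
  have hmul := mul_le_mul_of_nonneg_left htp hcoeff
  -- rewrite the goal trace via L
  rw [show psqrt ((Gb ^ 2) • (1 : Matrix (Fin m) (Fin m) ℝ) + M T) = L T from (hL T).symm]
  rw [hr1, hr2] at keyT
  rw [hr2] at hmul
  linarith [keyT, hDnn, hmul]
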